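/- Let X be a set, a, b : X → ℝ with 1 ≤ a(x) ≤ 2 ≤ b(x) for all x ∈ X. For s ∈ ℂ with Re(s) < 1 and x ∈ X, the integral ∫_{a(x)}^{∞} y^{s−2} (1 + a(x)/(b(x)y))^s dy converges absolutely and equals −a(x)^{s−1} Σ_{k≥0} binom(s,k) b(x)^{−k}/(s−1−k), where binom(s,k) = s(s−1)⋯(s−k+1)/k! is the generalized binomial coefficient, and the series converges absolutely. -/

import Mathlib

open MeasureTheory

/-- Generalized binomial coefficient `binom(s,k) = s(s−1)⋯(s−k+1)/k!`. -/
noncomputable def cbinom (s : ℂ) (k : ℕ) : ℂ :=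
  (∏ i ∈ Finset.range k, (s - i)) / (k.factorial : ℂ)

lemma iteratedDeriv_one_add_cpow (s : ℂ) (n : ℕ) :
    ∀ z : ℂ, 0 < (1 + z).re →
      iteratedDeriv n (fun w : ℂ => (1 + w) ^ s) z
        = (∏ i ∈ Finset.range n, (s - i)) * (1 + z) ^ (s - n) := by
  induction n with
  | zero => intro z hz; simp
  | succ n ih =>
    intro z hz
    have hU : IsOpen {w : ℂ | 0 < (1 + w).re} := by
      apply isOpen_lt continuous_const
      exact (Complex.continuous_re.comp (continuous_const.add continuous_id))
    rw [iteratedDeriv_succ]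
    have hev : iteratedDeriv n (fun w : ℂ => (1 + w) ^ s)
        =ᶠ[nhds z] fun w => (∏ i ∈ Finset.range n, (s - i)) * (1 + w) ^ (s - n) := by
      filter_upwards [hU.mem_nhds hz] with w hw using ih w hw
    rw [hev.deriv_eq]
    have hd : HasDerivAt (fun w : ℂ => (1 + w) ^ (s - n))
        ((s - n) * (1 + z) ^ (s - n - 1) * 1) z :=
      ((hasDerivAt_id z).const_add 1).cpow_const (Complex.mem_slitPlane_iff.mpr (Or.inl hz))
    rw [deriv_const_mul _ hd.differentiableAt, hd.deriv]
    have he : s - ((n : ℂ) + 1) = s - n - 1 := by ring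
    rw [Finset.prod_range_succ]
    push_cast
    rw [he]
    ring

lemma hasSum_cbinom (s : ℂ) {u : ℂ} (hu : ‖u‖ < 1) :
    HasSum (fun k : ℕ => cbinom s k * u ^ k) ((1 + u) ^ s) := by
  have hre : ∀ w : ℂ, ‖w‖ < 1 → 0 < (1 + w).re := by
    intro w hw
    have h1 : |w.re| ≤ ‖w‖ := Complex.abs_re_le_norm w
    have : (1 + w).re = 1 + w.re := by simp
    rw [this]
    cases abs_le.mp h1 with | intro h2 h3 => linarith
  have hdiff : DifferentiableOn ℂ (fun w : ℂ => (1 + w) ^ s) (Metric.ball 0 1) := by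
    intro w hw
    have hw1 : ‖w‖ < 1 := by simpa using hw
    exact (((hasDerivAt_id w).const_add 1).cpow_const
      (Complex.mem_slitPlane_iff.mpr (Or.inl (hre w hw1)))).differentiableAt.differentiableWithinAt
  have H := Complex.hasSum_taylorSeries_on_ball hdiff (mem_ball_zero_iff.mpr hu)
  have hiter : ∀ n : ℕ, (n.factorial : ℂ)⁻¹ • (u - 0) ^ n •
      iteratedDeriv n (fun w : ℂ => (1 + w) ^ s) 0 = cbinom s n * u ^ n := by
    intro n
    rw [iteratedDeriv_one_add_cpow s n 0 (by norm_num)]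
    simp only [smul_eq_mul, sub_zero, cbinom]
    have : ((1 : ℂ) + 0) ^ (s - n) = 1 := by simp
    rw [this]
    field_simp
  rw [show ((1 : ℂ) + u) ^ s = (fun w : ℂ => (1 + w) ^ s) u from rfl]
  exact (funext hiter) ▸ H

lemma summable_cbinom_mul (s : ℂ) {r : ℝ} (hr0 : 0 < r) (hr1 : r < 1) :
    Summable (fun k : ℕ => ‖cbinom s k‖ * r ^ k) := by
  apply summable_of_ratio_norm_eventually_le (r := (1 + r) / 2) (by linarith)
  obtain ⟨N, hN⟩ := exists_nat_ge (2 * r * ‖s‖ / (1 - r))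
  rw [Filter.eventually_atTop]
  refine ⟨N, fun n hn => ?_⟩
  have hrec : cbinom s (n + 1) = cbinom s n * ((s - n) / (n + 1)) := by
    simp only [cbinom, Finset.prod_range_succ, Nat.factorial_succ]
    push_cast
    field_simp
  have hfn : (n.factorial : ℂ) ≠ 0 := by exact_mod_cast n.factorial_ne_zero
  have hnorm : ‖cbinom s (n + 1)‖ = ‖cbinom s n‖ * (‖s - n‖ / (n + 1)) := by
    rw [hrec, norm_mul, norm_div]
    congr 1
    rw [show ((n : ℂ) + 1) = ((n + 1 : ℕ) : ℂ) from by push_cast; ring,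
      Complex.norm_natCast]
    push_cast; ring
  rw [Real.norm_of_nonneg (by positivity), Real.norm_of_nonneg (by positivity),
    hnorm, pow_succ]
  have hsn : ‖s - n‖ ≤ ‖s‖ + n := by
    calc ‖s - n‖ ≤ ‖s‖ + ‖(n : ℂ)‖ := norm_sub_le _ _
    _ = ‖s‖ + n := by rw [Complex.norm_natCast]
  have hkey : ‖s - n‖ / (n + 1) * r ≤ (1 + r) / 2 := by
    have hNn : 2 * r * ‖s‖ / (1 - r) ≤ (n : ℝ) := le_trans hN (by exact_mod_cast hn)
    have h1 : 2 * r * ‖s‖ ≤ (1 - r) * n := by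
      rw [div_le_iff₀ (by linarith)] at hNn; linarith
    rw [div_mul_eq_mul_div, div_le_iff₀ (by positivity)]
    have : ‖s - n‖ * r ≤ (‖s‖ + n) * r := by
      apply mul_le_mul_of_nonneg_right hsn hr0.le
    nlinarith [norm_nonneg s, Nat.cast_nonneg (α := ℝ) n, mul_le_mul_of_nonneg_right hsn hr0.le]
  calc ‖cbinom s n‖ * (‖s - n‖ / (n + 1)) * (r ^ n * r)
      = (‖s - n‖ / (n + 1) * r) * (‖cbinom s n‖ * r ^ n) := by ring
    _ ≤ (1 + r) / 2 * (‖cbinom s n‖ * r ^ n) := by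
        apply mul_le_mul_of_nonneg_right hkey (by positivity)

/-- for `Re s < 1`, `∫_{a(x)}^∞ y^{s−2}(1+a(x)/(b(x)y))^s dy
= −a(x)^{s−1} ∑_k binom(s,k) b(x)^{−k}/(s−1−k)`. -/
theorem stmt7 {X : Type*} (a b : X → ℝ) (hab : ∀ x, 1 ≤ a x ∧ a x ≤ 2 ∧ 2 ≤ b x)
    (s : ℂ) (hs : s.re < 1) (x : X) :
    IntegrableOn
      (fun y : ℝ => (y : ℂ) ^ (s - 2) * (((1 + a x / (b x * y) : ℝ)) : ℂ) ^ s)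
      (Set.Ioi (a x)) ∧
    Summable (fun k : ℕ => ‖cbinom s k * ((b x : ℂ))⁻¹ ^ k / (s - 1 - k)‖) ∧
    (∫ y in Set.Ioi (a x), (y : ℂ) ^ (s - 2) * (((1 + a x / (b x * y) : ℝ)) : ℂ) ^ s)
      = -(a x : ℂ) ^ (s - 1) * ∑' k : ℕ, cbinom s k * ((b x : ℂ))⁻¹ ^ k / (s - 1 - k) := by
  obtain ⟨hA1, hA2, hB2⟩ := hab x
  set A := a x with hAdef
  set B := b x with hBdef
  have hA0 : (0 : ℝ) < A := by linarith
  have hB0 : (0 : ℝ) < B := by linarith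
  have hB1 : (1 : ℝ) / B < 1 := by
    rw [div_lt_one hB0]; linarith
  have hB1' : (0 : ℝ) < 1 / B := by positivity
  -- the summand functions
  set g : ℕ → ℝ → ℂ := fun k y =>
    (cbinom s k * (A : ℂ) ^ k * ((B : ℂ)⁻¹) ^ k) * (y : ℂ) ^ (s - 2 - k) with hgdef
  have hre : ∀ k : ℕ, (s - 2 - (k : ℂ)).re < -1 := by
    intro k
    have : (0 : ℝ) ≤ k := Nat.cast_nonneg k
    simp only [Complex.sub_re, Complex.natCast_re]
    norm_num
    linarith
  -- integrability of each g k
  have hint : ∀ k : ℕ, IntegrableOn (g k) (Set.Ioi A) := by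
    intro k
    exact (integrableOn_Ioi_cpow_of_lt (hre k) hA0).const_mul _
  -- pointwise has-sum
  have hpt : ∀ y ∈ Set.Ioi A, HasSum (fun k => g k y)
      ((y : ℂ) ^ (s - 2) * (((1 + A / (B * y) : ℝ)) : ℂ) ^ s) := by
    intro y hy
    have hyA : A < y := hy
    have hy0 : (0 : ℝ) < y := by linarith
    set u : ℝ := A / (B * y) with hudef
    have hu0 : 0 < u := by positivity
    have hu1 : u < 1 := by
      rw [hudef, div_lt_one (by positivity)]
      nlinarith
    have hcu : ‖((u : ℝ) : ℂ)‖ < 1 := by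
      rw [Complex.norm_real, Real.norm_of_nonneg hu0.le]; exact hu1
    have H := (hasSum_cbinom s hcu).mul_left ((y : ℂ) ^ (s - 2))
    have hcoe : ((1 + u : ℝ) : ℂ) = 1 + (u : ℂ) := by push_cast; ring
    rw [hcoe]
    suffices hfun : (fun k => g k y) = fun i => (y : ℂ) ^ (s - 2) * (cbinom s i * ((u : ℝ) : ℂ) ^ i) by
      rw [hfun]; exact H
    funext k
    -- g k y = y^(s-2) * (cbinom s k * u^k)
    have hyc : (y : ℂ) ≠ 0 := Complex.ofReal_ne_zero.mpr hy0.ne'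
    have hBc : (B : ℂ) ≠ 0 := Complex.ofReal_ne_zero.mpr hB0.ne'
    have hu : ((u : ℝ) : ℂ) = (A : ℂ) * (B : ℂ)⁻¹ * (y : ℂ)⁻¹ := by
      rw [hudef]; push_cast; field_simp
    have hyk : (y : ℂ) ^ (-(k : ℂ)) = ((y : ℂ)⁻¹) ^ k := by
      rw [Complex.cpow_neg, Complex.cpow_natCast, inv_pow]
    have hadd : (y : ℂ) ^ (s - 2 - k) = (y : ℂ) ^ (s - 2) * (y : ℂ) ^ (-(k : ℂ)) := by
      rw [← Complex.cpow_add _ _ hyc]; ring_nf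
    rw [hgdef]
    simp only
    rw [hu, hadd, hyk]
    ring
  have hs1 : (0 : ℝ) < 1 - s.re := by linarith
  -- norm of g k
  have hnormg : ∀ k : ℕ, ∀ y ∈ Set.Ioi A,
      ‖g k y‖ = (‖cbinom s k‖ * A ^ k * ((1:ℝ)/B) ^ k) * y ^ (s.re - 2 - k) := by
    intro k y hy
    have hy0 : (0 : ℝ) < y := by have : A < y := hy; linarith
    rw [hgdef]
    have h4 : ‖(y : ℂ) ^ (s - 2 - (k : ℂ))‖ = y ^ (s.re - 2 - k) := by
      rw [Complex.norm_cpow_eq_rpow_re_of_pos hy0]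
      simp [Complex.sub_re, Complex.natCast_re, Complex.re_ofNat]
    simp only [norm_mul, norm_pow, norm_inv, Complex.norm_real,
      Real.norm_of_nonneg hA0.le, Real.norm_of_nonneg hB0.le, h4, one_div]
  -- integral of ‖g k‖
  have hintnorm : ∀ k : ℕ, (∫ y in Set.Ioi A, ‖g k y‖)
      = (‖cbinom s k‖ * A ^ k * ((1:ℝ)/B) ^ k) * (A ^ (s.re - 1 - k) / (k + 1 - s.re)) := by
    intro k
    have hrk : s.re - 2 - (k : ℝ) < -1 := by
      have : (0 : ℝ) ≤ k := Nat.cast_nonneg k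
      linarith
    rw [setIntegral_congr_fun measurableSet_Ioi (hnormg k),
      MeasureTheory.integral_const_mul _ _, integral_Ioi_rpow_of_lt hrk hA0]
    have h1 : s.re - 2 - (k : ℝ) + 1 = s.re - 1 - k := by ring
    rw [h1]
    have h3 : -(A ^ (s.re - 1 - (k : ℝ))) / (s.re - 1 - (k : ℝ))
        = A ^ (s.re - 1 - (k : ℝ)) / ((k : ℝ) + 1 - s.re) := by
      rw [neg_div, ← div_neg]
      congr 1
      ring
    rw [h3]
  -- summability of the integrals of norms
  have hsummaster := summable_cbinom_mul s hB1' hB1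
  have hboundsum : Summable (fun k : ℕ => ∫ y in Set.Ioi A, ‖g k y‖) := by
    apply Summable.of_nonneg_of_le (fun k => ?_) (fun k => ?_)
      ((hsummaster.mul_left (A ^ (s.re - 1) / (1 - s.re))))
    · rw [hintnorm k]
      have hk1 : (0 : ℝ) < (k : ℝ) + 1 - s.re := by
        have : (0 : ℝ) ≤ k := Nat.cast_nonneg k
        linarith
      positivity
    · rw [hintnorm k]
      have hk0 : (0 : ℝ) ≤ k := Nat.cast_nonneg k
      have hk1 : (0 : ℝ) < (k : ℝ) + 1 - s.re := by linarith
      have hApow : A ^ k * A ^ (s.re - 1 - k) = A ^ (s.re - 1) := by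
        rw [← Real.rpow_natCast A k, ← Real.rpow_add hA0]
        ring_nf
      have hfrac : A ^ (s.re - 1 - k) / ((k : ℝ) + 1 - s.re) ≤ A ^ (s.re - 1 - k) / (1 - s.re) := by
        apply div_le_div_of_nonneg_left (by positivity) hs1 (by linarith)
      calc ‖cbinom s k‖ * A ^ k * ((1:ℝ)/B) ^ k * (A ^ (s.re - 1 - k) / ((k:ℝ) + 1 - s.re))
          ≤ ‖cbinom s k‖ * A ^ k * ((1:ℝ)/B) ^ k * (A ^ (s.re - 1 - k) / (1 - s.re)) := by
            apply mul_le_mul_of_nonneg_left hfrac (by positivity)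
        _ = A ^ (s.re - 1) / (1 - s.re) * (‖cbinom s k‖ * ((1:ℝ)/B) ^ k) := by
            rw [← hApow]; ring
  -- term-wise integration
  have hkey := MeasureTheory.hasSum_integral_of_summable_integral_norm
    (μ := volume.restrict (Set.Ioi A)) hint hboundsum
  -- Part 1: integrability of the full integrand
  have hmeas : AEStronglyMeasurable
      (fun y : ℝ => (y : ℂ) ^ (s - 2) * (((1 + A / (B * y) : ℝ)) : ℂ) ^ s)
      (volume.restrict (Set.Ioi A)) := by
    apply ContinuousOn.aestronglyMeasurable _ measurableSet_Ioi
    intro y hy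
    have hy0 : (0 : ℝ) < y := by have : A < y := hy; linarith
    apply ContinuousWithinAt.mul
    · exact (Complex.continuousAt_ofReal_cpow_const _ _ (Or.inr hy0.ne')).continuousWithinAt
    · have hc1 : ContinuousAt (fun t : ℝ => (1 + A / (B * t) : ℝ)) y := by
        apply continuousAt_const.add (ContinuousAt.div continuousAt_const _ (by positivity))
        exact continuousAt_const.mul continuousAt_id
      have hpos : (0 : ℝ) < 1 + A / (B * y) := by positivity
      have hc2 : ContinuousAt (fun t : ℝ => ((t : ℝ) : ℂ) ^ s) (1 + A / (B * y)) :=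
        Complex.continuousAt_ofReal_cpow_const _ _ (Or.inr hpos.ne')
      have hcc := ContinuousAt.comp (f := fun t : ℝ => 1 + A / (B * t)) hc2 hc1
      simpa [Function.comp_def, Complex.ofReal_add, Complex.ofReal_div, Complex.ofReal_mul,
        Complex.ofReal_one] using hcc.continuousWithinAt
  have hintf : IntegrableOn
      (fun y : ℝ => (y : ℂ) ^ (s - 2) * (((1 + A / (B * y) : ℝ)) : ℂ) ^ s)
      (Set.Ioi A) := by
    apply Integrable.mono'
      (((integrableOn_Ioi_rpow_of_lt (show s.re - 2 < -1 by linarith) hA0).const_mul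
        ((2:ℝ) ^ |s.re|)))
      hmeas
    filter_upwards [ae_restrict_mem measurableSet_Ioi] with y hy
    have hyA : A < y := hy
    have hy0 : (0 : ℝ) < y := by linarith
    have hu0 : 0 < A / (B * y) := by positivity
    have hu1 : A / (B * y) ≤ 1 := by
      rw [div_le_one (by positivity)]
      nlinarith
    have h1u : (0 : ℝ) < 1 + A / (B * y) := by linarith
    rw [norm_mul,
      Complex.norm_cpow_eq_rpow_re_of_pos hy0,
      Complex.norm_cpow_eq_rpow_re_of_pos h1u]
    have hsub : (s - 2).re = s.re - 2 := by simp [Complex.sub_re]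
    rw [hsub]
    have hbound : (1 + A / (B * y)) ^ s.re ≤ (2:ℝ) ^ |s.re| := by
      rcases le_or_gt 0 s.re with h | h
      · rw [abs_of_nonneg h]
        exact Real.rpow_le_rpow (by linarith) (by linarith) h
      · calc (1 + A / (B * y)) ^ s.re ≤ 1 :=
              Real.rpow_le_one_of_one_le_of_nonpos (by linarith) h.le
          _ ≤ (2:ℝ) ^ |s.re| := Real.one_le_rpow (by norm_num) (abs_nonneg _)
    calc y ^ (s.re - 2) * (1 + A / (B * y)) ^ s.re
        ≤ y ^ (s.re - 2) * (2:ℝ) ^ |s.re| := by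
          apply mul_le_mul_of_nonneg_left hbound (Real.rpow_nonneg hy0.le _)
      _ = (2:ℝ) ^ |s.re| * y ^ (s.re - 2) := by ring
  -- Part 2: summability of norms of the series
  have hsum2 : Summable (fun k : ℕ => ‖cbinom s k * ((B : ℂ))⁻¹ ^ k / (s - 1 - k)‖) := by
    apply Summable.of_nonneg_of_le (fun k => norm_nonneg _) (fun k => ?_)
      (hsummaster.mul_left (1 / (1 - s.re)))
    have hk0 : (0 : ℝ) ≤ k := Nat.cast_nonneg k
    have hden : (1 : ℝ) - s.re ≤ ‖s - 1 - (k : ℂ)‖ := by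
      calc (1 : ℝ) - s.re ≤ (k : ℝ) + 1 - s.re := by linarith
        _ = |(s - 1 - (k : ℂ)).re| := by
            have h3 : (s - 1 - (k : ℂ)).re = s.re - 1 - k := by
              simp [Complex.sub_re, Complex.natCast_re]
            rw [h3, abs_of_nonpos (by linarith)]
            ring
        _ ≤ ‖s - 1 - (k : ℂ)‖ := Complex.abs_re_le_norm _
    rw [norm_div, norm_mul, norm_pow, norm_inv, Complex.norm_real,
      Real.norm_of_nonneg hB0.le]
    rw [div_le_iff₀ (by linarith)]
    have h1 : ‖cbinom s k‖ * (B⁻¹) ^ k = ‖cbinom s k‖ * ((1:ℝ)/B) ^ k := by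
      rw [one_div]
    rw [h1]
    calc ‖cbinom s k‖ * ((1:ℝ)/B) ^ k
        = (1 - s.re) * ((1 / (1 - s.re)) * (‖cbinom s k‖ * ((1:ℝ)/B) ^ k)) := by
          field_simp
      _ ≤ ‖s - 1 - (k : ℂ)‖ * ((1 / (1 - s.re)) * (‖cbinom s k‖ * ((1:ℝ)/B) ^ k)) := by
          apply mul_le_mul_of_nonneg_right hden (by positivity)
      _ = (1 / (1 - s.re)) * (‖cbinom s k‖ * ((1:ℝ)/B) ^ k) * ‖s - 1 - (k : ℂ)‖ := by ring
  refine ⟨hintf, hsum2, ?_⟩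
  -- Part 3: the computation
  have hAc : (A : ℂ) ≠ 0 := Complex.ofReal_ne_zero.mpr hA0.ne'
  have hintg : ∀ k : ℕ, (∫ y in Set.Ioi A, g k y)
      = -(A : ℂ) ^ (s - 1) * (cbinom s k * ((B : ℂ))⁻¹ ^ k / (s - 1 - k)) := by
    intro k
    rw [hgdef]
    simp only
    rw [MeasureTheory.integral_const_mul _ _, integral_Ioi_cpow_of_lt (hre k) hA0]
    have h1 : s - 2 - (k : ℂ) + 1 = s - 1 - k := by ring
    rw [h1]
    have hs1k : s - 1 - (k : ℂ) ≠ 0 := by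
      intro h
      have := congrArg Complex.re h
      simp [Complex.sub_re, Complex.natCast_re] at this
      have hk0 : (0 : ℝ) ≤ k := Nat.cast_nonneg k
      linarith
    have hApow : (A : ℂ) ^ k * (A : ℂ) ^ (s - 1 - (k : ℂ)) = (A : ℂ) ^ (s - 1) := by
      rw [← Complex.cpow_natCast, ← Complex.cpow_add _ _ hAc]
      ring_nf
    field_simp
    rw [← hApow]
    ring
  rw [setIntegral_congr_fun measurableSet_Ioi (fun y hy => ((hpt y hy).tsum_eq).symm),
    ← hkey.tsum_eq]
  rw [tsum_congr hintg, tsum_mul_left]
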